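/- Let g be a polynomial on ℝ^(m×n) and set f = exp(−tr Δ_A / (8π)) g (a finite sum since g is a polynomial). Then f satisfies (E − Δ_A/(4π)) f = λ · I · f if and only if g satisfies E g = λ · I · g. -/

import Mathlib

open scoped BigOperators
open Matrix MvPolynomial

/-- Entry `(i,j)` of the generalized Laplacian `Δ_A` acting on polynomials. -/
noncomputable def lapPoly {m n : ℕ} (A : Matrix (Fin m) (Fin m) ℝ) (i j : Fin n)
    (p : MvPolynomial (Fin m × Fin n) ℝ) : MvPolynomial (Fin m × Fin n) ℝ :=
  ∑ a, ∑ b, MvPolynomial.C (A⁻¹ a b) * pderiv (a, i) (pderiv (b, j) p)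

/-- The trace `tr Δ_A` acting on polynomials. -/
noncomputable def trLapPoly {m n : ℕ} (A : Matrix (Fin m) (Fin m) ℝ)
    (p : MvPolynomial (Fin m × Fin n) ℝ) : MvPolynomial (Fin m × Fin n) ℝ :=
  ∑ c : Fin n, lapPoly A c c p

/-- Entry `(i,j)` of the generalized Euler operator on polynomials. -/
noncomputable def eulerPoly {m n : ℕ} (i j : Fin n)
    (p : MvPolynomial (Fin m × Fin n) ℝ) : MvPolynomial (Fin m × Fin n) ℝ :=
  ∑ d, X (d, i) * pderiv (d, j) p

/-- `exp(c · tr Δ_A)` applied to a polynomial (a finite sum). -/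
noncomputable def expTrLap {m n : ℕ} (A : Matrix (Fin m) (Fin m) ℝ) (c : ℝ)
    (p : MvPolynomial (Fin m × Fin n) ℝ) : MvPolynomial (Fin m × Fin n) ℝ :=
  ∑ k ∈ Finset.range (p.totalDegree + 1),
    (c ^ k / k.factorial : ℝ) • (trLapPoly A)^[k] p

section Aux

variable {σ : Type*} [DecidableEq σ]

lemma pderiv_comm' (i j : σ) (p : MvPolynomial σ ℝ) :
    pderiv i (pderiv j p) = pderiv j (pderiv i p) := by
  rcases eq_or_ne i j with rfl | hij
  · rfl
  induction p using MvPolynomial.induction_on' with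
  | monomial s a =>
    simp only [pderiv_monomial, Finsupp.coe_tsub, Pi.sub_apply,
      Finsupp.single_apply, if_neg hij, if_neg (Ne.symm hij), Nat.sub_zero]
    rw [tsub_right_comm]
    congr 1
    ring
  | add p q hp hq => simp [hp, hq]

lemma totalDegree_pderiv_le' (i : σ) (p : MvPolynomial σ ℝ) :
    (pderiv i p).totalDegree ≤ p.totalDegree - 1 := by
  conv_lhs => rw [p.as_sum, map_sum]
  refine (totalDegree_finset_sum _ _).trans (Finset.sup_le fun s hs => ?_)
  rw [pderiv_monomial]
  rcases eq_or_ne (coeff s p * (s i : ℝ)) 0 with h | h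
  · simp [h]
  have hsi : s i ≠ 0 := by
    intro h0; apply h; simp [h0]
  rw [totalDegree_monomial _ h]
  have hle : Finsupp.single i 1 ≤ s := by
    rw [Finsupp.single_le_iff]; omega
  have key : (s - Finsupp.single i 1).sum (fun _ e => e) + (Finsupp.single i 1).sum (fun _ e => e)
      = s.sum fun _ e => e := by
    rw [← Finsupp.sum_add_index (by simp) (by intros; rfl), tsub_add_cancel_of_le hle]
  have hs' : (s.sum fun _ e => e) ≤ p.totalDegree := le_totalDegree hs
  simp only [Finsupp.sum_single_index] at key
  omega

lemma pderiv_eq_zero_of_totalDegree_eq_zero (i : σ)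
    {p : MvPolynomial σ ℝ} (h : p.totalDegree = 0) : pderiv i p = 0 := by
  conv_lhs => rw [p.as_sum, map_sum]
  refine Finset.sum_eq_zero fun s hs => ?_
  rw [pderiv_monomial, (totalDegree_eq_zero_iff _ p).mp h s hs i]
  simp

lemma pderiv_X_mul' (v w : σ) (q : MvPolynomial σ ℝ) :
    pderiv v (X w * q) = (if w = v then 1 else 0) * q + X w * pderiv v q := by
  rw [pderiv_mul]
  congr 1
  rcases eq_or_ne w v with rfl | h
  · simp [pderiv_X_self]
  · simp [pderiv_X_of_ne h, if_neg h]

lemma pderiv_pderiv_X_mul (u v w : σ) (q : MvPolynomial σ ℝ) :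
    pderiv u (pderiv v (X w * q)) =
      (if w = v then 1 else 0) * pderiv u q + (if w = u then 1 else 0) * pderiv v q
        + X w * pderiv u (pderiv v q) := by
  rw [pderiv_X_mul', map_add, pderiv_X_mul']
  have h1 : pderiv u ((if w = v then 1 else 0 : MvPolynomial σ ℝ) * q)
      = (if w = v then 1 else 0) * pderiv u q := by
    split_ifs <;> simp
  rw [h1]; ring

end Aux

section Ops

variable {m n : ℕ} (A : Matrix (Fin m) (Fin m) ℝ) (i j : Fin n)

lemma lapPoly_add (p q : MvPolynomial (Fin m × Fin n) ℝ) :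
    lapPoly A i j (p + q) = lapPoly A i j p + lapPoly A i j q := by
  simp [lapPoly, mul_add, Finset.sum_add_distrib]

lemma lapPoly_smul (c : ℝ) (p : MvPolynomial (Fin m × Fin n) ℝ) :
    lapPoly A i j (c • p) = c • lapPoly A i j p := by
  simp only [lapPoly, smul_eq_C_mul, pderiv_C_mul, Finset.mul_sum, mul_left_comm]

lemma lapPoly_zero : lapPoly A i j (0 : MvPolynomial (Fin m × Fin n) ℝ) = 0 := by
  simp [lapPoly]

lemma lapPoly_sum {α : Type*} (s : Finset α) (f : α → MvPolynomial (Fin m × Fin n) ℝ) :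
    lapPoly A i j (∑ x ∈ s, f x) = ∑ x ∈ s, lapPoly A i j (f x) := by
  classical
  induction s using Finset.induction with
  | empty => simp [lapPoly_zero]
  | @insert x s hx ih => rw [Finset.sum_insert hx, lapPoly_add, ih, Finset.sum_insert hx]

lemma trLapPoly_add (p q : MvPolynomial (Fin m × Fin n) ℝ) :
    trLapPoly A (p + q) = trLapPoly A p + trLapPoly A q := by
  simp [trLapPoly, lapPoly_add, Finset.sum_add_distrib]

lemma trLapPoly_smul (c : ℝ) (p : MvPolynomial (Fin m × Fin n) ℝ) :
    trLapPoly A (c • p) = c • trLapPoly A p := by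
  simp [trLapPoly, lapPoly_smul, Finset.smul_sum]

lemma trLapPoly_zero : trLapPoly A (0 : MvPolynomial (Fin m × Fin n) ℝ) = 0 := by
  simp [trLapPoly, lapPoly_zero]

lemma eulerPoly_add (p q : MvPolynomial (Fin m × Fin n) ℝ) :
    eulerPoly i j (p + q) = eulerPoly i j p + eulerPoly i j q := by
  simp [eulerPoly, mul_add, Finset.sum_add_distrib]

lemma eulerPoly_smul (c : ℝ) (p : MvPolynomial (Fin m × Fin n) ℝ) :
    eulerPoly i j (c • p) = c • eulerPoly i j p := by
  simp only [eulerPoly, smul_eq_C_mul, pderiv_C_mul, Finset.mul_sum, mul_left_comm]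

lemma eulerPoly_sum {α : Type*} (s : Finset α) (f : α → MvPolynomial (Fin m × Fin n) ℝ) :
    eulerPoly i j (∑ x ∈ s, f x) = ∑ x ∈ s, eulerPoly i j (f x) := by
  classical
  induction s using Finset.induction with
  | empty => simp [eulerPoly]
  | @insert x s hx ih => rw [Finset.sum_insert hx, eulerPoly_add, ih, Finset.sum_insert hx]

lemma totalDegree_lapPoly_le (p : MvPolynomial (Fin m × Fin n) ℝ) :
    (lapPoly A i j p).totalDegree ≤ p.totalDegree - 1 := by
  refine (totalDegree_finset_sum _ _).trans (Finset.sup_le fun a _ => ?_)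
  refine (totalDegree_finset_sum _ _).trans (Finset.sup_le fun b _ => ?_)
  calc (C (A⁻¹ a b) * pderiv (a, i) (pderiv (b, j) p)).totalDegree
      ≤ (C (A⁻¹ a b)).totalDegree + (pderiv (a, i) (pderiv (b, j) p)).totalDegree :=
        totalDegree_mul _ _
    _ ≤ 0 + (pderiv (b, j) p).totalDegree - 1 := by
        have := totalDegree_pderiv_le' (a, i) (pderiv (b, j) p)
        simp only [totalDegree_C]; omega
    _ ≤ p.totalDegree - 1 := by
        have := totalDegree_pderiv_le' (b, j) p
        omega

lemma totalDegree_trLapPoly_le (p : MvPolynomial (Fin m × Fin n) ℝ) :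
    (trLapPoly A p).totalDegree ≤ p.totalDegree - 1 := by
  refine (totalDegree_finset_sum _ _).trans (Finset.sup_le fun c _ => ?_)
  exact totalDegree_lapPoly_le A c c p

lemma totalDegree_eulerPoly_le (p : MvPolynomial (Fin m × Fin n) ℝ) :
    (eulerPoly i j p).totalDegree ≤ p.totalDegree := by
  refine (totalDegree_finset_sum _ _).trans (Finset.sup_le fun d _ => ?_)
  rcases eq_or_ne (pderiv (d, j) p) 0 with h | h
  · simp [h]
  have h1 : (pderiv (d, j) p).totalDegree ≤ p.totalDegree - 1 := totalDegree_pderiv_le' _ _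
  have h2 : p.totalDegree ≠ 0 := by
    intro h0
    exact h (pderiv_eq_zero_of_totalDegree_eq_zero _ h0)
  calc (X (d, i) * pderiv (d, j) p).totalDegree
      ≤ (X (d, i) : MvPolynomial (Fin m × Fin n) ℝ).totalDegree
        + (pderiv (d, j) p).totalDegree := totalDegree_mul _ _
    _ ≤ 1 + (p.totalDegree - 1) := by rw [totalDegree_X]; omega
    _ ≤ p.totalDegree := by omega

lemma trLapPoly_eq_zero_of_deg0 {p : MvPolynomial (Fin m × Fin n) ℝ}
    (h : p.totalDegree = 0) : trLapPoly A p = 0 := by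
  simp [trLapPoly, lapPoly, pderiv_eq_zero_of_totalDegree_eq_zero _ h]

lemma trLapPoly_iterate_zero (k : ℕ) : (trLapPoly A)^[k] (0 : MvPolynomial (Fin m × Fin n) ℝ) = 0 :=
  Function.iterate_fixed (trLapPoly_zero A) k

lemma trLapPoly_iterate_add (k : ℕ) (p q : MvPolynomial (Fin m × Fin n) ℝ) :
    (trLapPoly A)^[k] (p + q) = (trLapPoly A)^[k] p + (trLapPoly A)^[k] q := by
  induction k generalizing p q with
  | zero => rfl
  | succ k ih => simp only [Function.iterate_succ_apply, trLapPoly_add, ih]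

lemma trLapPoly_iterate_smul (k : ℕ) (c : ℝ) (p : MvPolynomial (Fin m × Fin n) ℝ) :
    (trLapPoly A)^[k] (c • p) = c • (trLapPoly A)^[k] p := by
  induction k generalizing p with
  | zero => rfl
  | succ k ih => simp only [Function.iterate_succ_apply, trLapPoly_smul, ih]

lemma trLapPoly_iterate_sub (k : ℕ) (p q : MvPolynomial (Fin m × Fin n) ℝ) :
    (trLapPoly A)^[k] (p - q) = (trLapPoly A)^[k] p - (trLapPoly A)^[k] q := by
  have := trLapPoly_iterate_add A k q (p - q)
  rw [add_sub_cancel] at this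
  rw [this]; abel

lemma totalDegree_trLapPoly_iterate_le (k : ℕ) (p : MvPolynomial (Fin m × Fin n) ℝ) :
    ((trLapPoly A)^[k] p).totalDegree ≤ p.totalDegree - k := by
  induction k generalizing p with
  | zero => simp
  | succ k ih =>
    rw [Function.iterate_succ_apply]
    have h1 := ih (trLapPoly A p)
    have h2 := totalDegree_trLapPoly_le A p
    omega

lemma trLapPoly_iterate_eq_zero {k : ℕ} {p : MvPolynomial (Fin m × Fin n) ℝ}
    (h : p.totalDegree < k) : (trLapPoly A)^[k] p = 0 := by
  induction k generalizing p with
  | zero => omega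
  | succ k ih =>
    rw [Function.iterate_succ_apply]
    rcases eq_or_ne p.totalDegree 0 with h0 | h0
    · rw [trLapPoly_eq_zero_of_deg0 A h0, trLapPoly_iterate_zero]
    · have := totalDegree_trLapPoly_le A p
      exact ih (by omega)

lemma expTrLap_eq {M : ℕ} {p : MvPolynomial (Fin m × Fin n) ℝ} (c : ℝ)
    (hM : p.totalDegree < M) :
    expTrLap A c p = ∑ k ∈ Finset.range M,
      (c ^ k / k.factorial : ℝ) • (trLapPoly A)^[k] p := by
  rw [expTrLap]
  refine Finset.sum_subset (Finset.range_subset_range.mpr (by omega)) fun k _ hk => ?_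
  rw [Finset.mem_range, not_lt] at hk
  rw [trLapPoly_iterate_eq_zero A (by omega), smul_zero]

lemma expTrLap_smul (c s : ℝ) (p : MvPolynomial (Fin m × Fin n) ℝ) :
    expTrLap A c (s • p) = s • expTrLap A c p := by
  rw [expTrLap_eq A c (M := p.totalDegree + 1)
    (lt_of_le_of_lt (totalDegree_smul_le _ _) (by omega)), expTrLap, Finset.smul_sum]
  refine Finset.sum_congr rfl fun k _ => ?_
  rw [trLapPoly_iterate_smul, smul_comm]

lemma expTrLap_sub (c : ℝ) (p q : MvPolynomial (Fin m × Fin n) ℝ) :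
    expTrLap A c (p - q) = expTrLap A c p - expTrLap A c q := by
  set M := max (max p.totalDegree q.totalDegree) (p - q).totalDegree + 1 with hM
  rw [expTrLap_eq A c (M := M) (by omega), expTrLap_eq A c (p := p) (M := M) (by omega),
    expTrLap_eq A c (p := q) (M := M) (by omega), ← Finset.sum_sub_distrib]
  refine Finset.sum_congr rfl fun k _ => ?_
  rw [trLapPoly_iterate_sub, smul_sub]

lemma expTrLap_eq_zero {c : ℝ} {p : MvPolynomial (Fin m × Fin n) ℝ}
    (h : expTrLap A c p = 0) : p = 0 := by
  by_contra hp
  obtain ⟨d, hd, hsup⟩ := Finset.exists_mem_eq_sup p.support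
    (support_nonempty.mpr hp) (fun s => s.sum fun _ e => e)
  have hdeg : (d.sum fun _ e => e) = p.totalDegree := hsup.symm
  have hco : coeff d (expTrLap A c p) = coeff d p := by
    rw [expTrLap, coeff_sum]
    rw [Finset.sum_eq_single_of_mem 0 (Finset.mem_range.mpr (by omega))]
    · simp
    · intro k _ hk
      rw [coeff_smul]
      rcases eq_or_ne p.totalDegree 0 with h0 | h0
      · have : (trLapPoly A)^[k] p = 0 := by
          obtain ⟨k', rfl⟩ := Nat.exists_eq_succ_of_ne_zero hk
          rw [Function.iterate_succ_apply, trLapPoly_eq_zero_of_deg0 A h0,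
            trLapPoly_iterate_zero]
        rw [this, coeff_zero, smul_zero]
      · have hlt : ((trLapPoly A)^[k] p).totalDegree < ∑ i ∈ d.support, d i := by
          have h1 := totalDegree_trLapPoly_iterate_le A k p
          have : (∑ i ∈ d.support, d i) = p.totalDegree := hdeg
          omega
        rw [coeff_eq_zero_of_totalDegree_lt hlt, smul_zero]
  rw [h, coeff_zero] at hco
  exact mem_support_iff.mp hd hco.symm

end Ops

section Comm

variable {m n : ℕ} (A : Matrix (Fin m) (Fin m) ℝ) (i j : Fin n)

lemma trLap_euler (hinv : ∀ a b, A⁻¹ a b = A⁻¹ b a) (p : MvPolynomial (Fin m × Fin n) ℝ) :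
    trLapPoly A (eulerPoly i j p) =
      eulerPoly i j (trLapPoly A p) + (2 : ℝ) • lapPoly A i j p := by
  simp only [trLapPoly, lapPoly, eulerPoly, map_sum, pderiv_pderiv_X_mul, mul_add,
    Finset.mul_sum, Finset.sum_add_distrib, pderiv_C_mul]
  have hS1 : (∑ c : Fin n, ∑ a : Fin m, ∑ b : Fin m, ∑ d : Fin m,
      C (A⁻¹ a b) * ((if (d, i) = (b, c) then 1 else 0) * pderiv (a, c) (pderiv (d, j) p)))
      = ∑ a, ∑ b, C (A⁻¹ a b) * pderiv (a, i) (pderiv (b, j) p) := by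
    rw [Finset.sum_comm]
    refine Finset.sum_congr rfl fun a _ => ?_
    rw [Finset.sum_comm]
    refine Finset.sum_congr rfl fun b _ => ?_
    rw [Finset.sum_comm]
    have : ∀ d : Fin m, (∑ c : Fin n,
        C (A⁻¹ a b) * ((if (d, i) = (b, c) then 1 else 0) * pderiv (a, c) (pderiv (d, j) p)))
        = if d = b then C (A⁻¹ a b) * pderiv (a, i) (pderiv (d, j) p) else 0 := by
      intro d
      rcases eq_or_ne d b with rfl | hdb
      · rw [if_pos rfl]
        rw [Finset.sum_eq_single i]
        · simp
        · intro c _ hc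
          rw [if_neg (by simp [Ne.symm hc])]; simp
        · simp
      · rw [if_neg hdb]
        refine Finset.sum_eq_zero fun c _ => ?_
        rw [if_neg (by simp [hdb])]; simp
    rw [Finset.sum_congr rfl fun d _ => this d, Finset.sum_ite_eq' Finset.univ b
      (fun d => C (A⁻¹ a b) * pderiv (a, i) (pderiv (d, j) p))]
    simp
  have hS2 : (∑ c : Fin n, ∑ a : Fin m, ∑ b : Fin m, ∑ d : Fin m,
      C (A⁻¹ a b) * ((if (d, i) = (a, c) then 1 else 0) * pderiv (b, c) (pderiv (d, j) p)))
      = ∑ a, ∑ b, C (A⁻¹ a b) * pderiv (a, i) (pderiv (b, j) p) := by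
    rw [Finset.sum_comm]
    have step : (∑ a : Fin m, ∑ c : Fin n, ∑ b : Fin m, ∑ d : Fin m,
        C (A⁻¹ a b) * ((if (d, i) = (a, c) then 1 else 0) * pderiv (b, c) (pderiv (d, j) p)))
        = ∑ a : Fin m, ∑ b : Fin m, C (A⁻¹ a b) * pderiv (b, i) (pderiv (a, j) p) := by
      refine Finset.sum_congr rfl fun a _ => ?_
      rw [Finset.sum_comm]
      refine Finset.sum_congr rfl fun b _ => ?_
      rw [Finset.sum_comm]
      have key : ∀ d : Fin m, (∑ c : Fin n,
          C (A⁻¹ a b) * ((if (d, i) = (a, c) then 1 else 0) * pderiv (b, c) (pderiv (d, j) p)))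
          = if d = a then C (A⁻¹ a b) * pderiv (b, i) (pderiv (d, j) p) else 0 := by
        intro d
        rcases eq_or_ne d a with rfl | hda
        · rw [if_pos rfl]
          rw [Finset.sum_eq_single i]
          · simp
          · intro c _ hc
            rw [if_neg (by simp [Ne.symm hc])]; simp
          · simp
        · rw [if_neg hda]
          refine Finset.sum_eq_zero fun c _ => ?_
          rw [if_neg (by simp [hda])]; simp
      rw [Finset.sum_congr rfl fun d _ => key d, Finset.sum_ite_eq' Finset.univ a
        (fun d => C (A⁻¹ a b) * pderiv (b, i) (pderiv (d, j) p))]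
      simp
    rw [step, Finset.sum_comm]
    exact Finset.sum_congr rfl fun x _ => Finset.sum_congr rfl fun y _ => by rw [hinv y x]
  have hS3 : (∑ c : Fin n, ∑ a : Fin m, ∑ b : Fin m, ∑ d : Fin m,
      C (A⁻¹ a b) * (X (d, i) * pderiv (a, c) (pderiv (b, c) (pderiv (d, j) p))))
      = ∑ d : Fin m, ∑ c : Fin n, ∑ a : Fin m, ∑ b : Fin m,
        X (d, i) * (C (A⁻¹ a b) * pderiv (d, j) (pderiv (a, c) (pderiv (b, c) p))) := by
    calc (∑ c : Fin n, ∑ a : Fin m, ∑ b : Fin m, ∑ d : Fin m,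
        C (A⁻¹ a b) * (X (d, i) * pderiv (a, c) (pderiv (b, c) (pderiv (d, j) p))))
        = ∑ c : Fin n, ∑ a : Fin m, ∑ d : Fin m, ∑ b : Fin m,
          C (A⁻¹ a b) * (X (d, i) * pderiv (a, c) (pderiv (b, c) (pderiv (d, j) p))) :=
          Finset.sum_congr rfl fun c _ => Finset.sum_congr rfl fun a _ => Finset.sum_comm
      _ = ∑ c : Fin n, ∑ d : Fin m, ∑ a : Fin m, ∑ b : Fin m,
          C (A⁻¹ a b) * (X (d, i) * pderiv (a, c) (pderiv (b, c) (pderiv (d, j) p))) :=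
          Finset.sum_congr rfl fun c _ => Finset.sum_comm
      _ = ∑ d : Fin m, ∑ c : Fin n, ∑ a : Fin m, ∑ b : Fin m,
          C (A⁻¹ a b) * (X (d, i) * pderiv (a, c) (pderiv (b, c) (pderiv (d, j) p))) :=
          Finset.sum_comm
      _ = ∑ d : Fin m, ∑ c : Fin n, ∑ a : Fin m, ∑ b : Fin m,
          X (d, i) * (C (A⁻¹ a b) * pderiv (d, j) (pderiv (a, c) (pderiv (b, c) p))) := by
          refine Finset.sum_congr rfl fun d _ => Finset.sum_congr rfl fun c _ =>
            Finset.sum_congr rfl fun a _ => Finset.sum_congr rfl fun b _ => ?_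
          rw [mul_left_comm]
          congr 2
          rw [pderiv_comm' (d, j) (a, c), pderiv_comm' (d, j) (b, c)]
  rw [hS1, hS2, hS3, two_smul]
  abel


lemma pderiv_lapPoly (v : Fin m × Fin n) (p : MvPolynomial (Fin m × Fin n) ℝ) :
    pderiv v (lapPoly A i j p) = lapPoly A i j (pderiv v p) := by
  simp only [lapPoly, map_sum, pderiv_C_mul]
  refine Finset.sum_congr rfl fun a _ => Finset.sum_congr rfl fun b _ => ?_
  rw [pderiv_comm' v (a, i), pderiv_comm' v (b, j)]

lemma lapPoly_C_mul (r : ℝ) (p : MvPolynomial (Fin m × Fin n) ℝ) :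
    lapPoly A i j (C r * p) = C r * lapPoly A i j p := by
  simp only [lapPoly, pderiv_C_mul, Finset.mul_sum, mul_left_comm]

lemma trLap_lap (p : MvPolynomial (Fin m × Fin n) ℝ) :
    trLapPoly A (lapPoly A i j p) = lapPoly A i j (trLapPoly A p) := by
  rw [trLapPoly, trLapPoly, lapPoly_sum]
  refine Finset.sum_congr rfl fun c _ => ?_
  have unf : lapPoly A c c p
      = ∑ a, ∑ b, C (A⁻¹ a b) * pderiv (a, c) (pderiv (b, c) p) := rfl
  conv_lhs => rw [lapPoly]
  conv_rhs => rw [unf]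
  rw [lapPoly_sum]
  refine Finset.sum_congr rfl fun a _ => ?_
  rw [lapPoly_sum]
  refine Finset.sum_congr rfl fun b _ => ?_
  rw [lapPoly_C_mul, pderiv_lapPoly, pderiv_lapPoly]

lemma lap_iterate (k : ℕ) (p : MvPolynomial (Fin m × Fin n) ℝ) :
    (trLapPoly A)^[k] (lapPoly A i j p) = lapPoly A i j ((trLapPoly A)^[k] p) := by
  induction k generalizing p with
  | zero => rfl
  | succ k ih => rw [Function.iterate_succ_apply, Function.iterate_succ_apply,
      trLap_lap, ih]

lemma euler_trLap (hinv : ∀ a b, A⁻¹ a b = A⁻¹ b a) (p : MvPolynomial (Fin m × Fin n) ℝ) :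
    eulerPoly i j (trLapPoly A p) =
      trLapPoly A (eulerPoly i j p) - (2 : ℝ) • lapPoly A i j p := by
  rw [trLap_euler A i j hinv p]; abel

lemma euler_iter (hinv : ∀ a b, A⁻¹ a b = A⁻¹ b a) (k : ℕ)
    (p : MvPolynomial (Fin m × Fin n) ℝ) :
    eulerPoly i j ((trLapPoly A)^[k + 1] p) =
      (trLapPoly A)^[k + 1] (eulerPoly i j p)
        - ((2 * (k + 1) : ℝ)) • lapPoly A i j ((trLapPoly A)^[k] p) := by
  induction k generalizing p with
  | zero =>
    rw [Function.iterate_one, Function.iterate_zero, id]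
    have := euler_trLap A i j hinv p
    rw [this]
    norm_num
  | succ k ih =>
    have e1 : (trLapPoly A)^[k + 1 + 1] p = (trLapPoly A)^[k + 1] (trLapPoly A p) :=
      Function.iterate_succ_apply _ _ _
    have e2 : (trLapPoly A)^[k] (trLapPoly A p) = (trLapPoly A)^[k + 1] p :=
      (Function.iterate_succ_apply _ _ _).symm
    have e3 : (trLapPoly A)^[k + 1] (trLapPoly A (eulerPoly i j p))
        = (trLapPoly A)^[k + 1 + 1] (eulerPoly i j p) :=
      (Function.iterate_succ_apply _ _ _).symm
    rw [e1, ih (trLapPoly A p), e2, euler_trLap A i j hinv p, trLapPoly_iterate_sub,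
      trLapPoly_iterate_smul, lap_iterate, e3]
    push_cast
    module

lemma euler_expTrLap (hinv : ∀ a b, A⁻¹ a b = A⁻¹ b a) (c : ℝ)
    (g : MvPolynomial (Fin m × Fin n) ℝ) :
    eulerPoly i j (expTrLap A c g) =
      expTrLap A c (eulerPoly i j g) - (2 * c) • lapPoly A i j (expTrLap A c g) := by
  set N := g.totalDegree + 1 with hN
  have key : ∀ k : ℕ, (c ^ (k+1) / (k+1).factorial : ℝ)
        • ((2 * ((k : ℝ) + 1)) • lapPoly A i j ((trLapPoly A)^[k] g))
      = (2 * c) • ((c ^ k / k.factorial : ℝ) • lapPoly A i j ((trLapPoly A)^[k] g)) := by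
    intro k
    rw [smul_smul, smul_smul]
    congr 1
    rw [Nat.factorial_succ]
    have h1 : ((k : ℝ) + 1) ≠ 0 := by positivity
    have h2 : (k.factorial : ℝ) ≠ 0 := Nat.cast_ne_zero.mpr k.factorial_ne_zero
    field_simp
    push_cast
    ring
  have hterm : ∀ k ∈ Finset.range N,
      (c ^ (k+1) / (k+1).factorial : ℝ) • eulerPoly i j ((trLapPoly A)^[k+1] g)
      = (c ^ (k+1) / (k+1).factorial : ℝ) • (trLapPoly A)^[k+1] (eulerPoly i j g)
        - (2 * c) • ((c ^ k / k.factorial : ℝ) • lapPoly A i j ((trLapPoly A)^[k] g)) := by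
    intro k _
    rw [euler_iter A i j hinv k g, smul_sub, key k]
  calc eulerPoly i j (expTrLap A c g)
      = ∑ k ∈ Finset.range (N + 1),
          (c ^ k / k.factorial : ℝ) • eulerPoly i j ((trLapPoly A)^[k] g) := by
        rw [expTrLap_eq A c (M := N + 1) (by omega), eulerPoly_sum]
        exact Finset.sum_congr rfl fun k _ => eulerPoly_smul _ _ _ _
    _ = (∑ k ∈ Finset.range N,
          (c ^ (k+1) / (k+1).factorial : ℝ) • eulerPoly i j ((trLapPoly A)^[k+1] g))
          + (c ^ 0 / Nat.factorial 0 : ℝ) • eulerPoly i j ((trLapPoly A)^[0] g) :=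
        Finset.sum_range_succ' _ _
    _ = ((∑ k ∈ Finset.range N,
          (c ^ (k+1) / (k+1).factorial : ℝ) • (trLapPoly A)^[k+1] (eulerPoly i j g))
          + (c ^ 0 / Nat.factorial 0 : ℝ) • (trLapPoly A)^[0] (eulerPoly i j g))
          - (2 * c) • ∑ k ∈ Finset.range N,
              (c ^ k / k.factorial : ℝ) • lapPoly A i j ((trLapPoly A)^[k] g) := by
        rw [Finset.sum_congr rfl hterm, Finset.sum_sub_distrib, Finset.smul_sum]
        abel
    _ = expTrLap A c (eulerPoly i j g) - (2 * c) • lapPoly A i j (expTrLap A c g) := by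
        congr 1
        · rw [← Finset.sum_range_succ'
            (fun k => (c ^ k / k.factorial : ℝ) • (trLapPoly A)^[k] (eulerPoly i j g)) N]
          rw [expTrLap_eq A c (M := N + 1)
            (lt_of_le_of_lt (totalDegree_eulerPoly_le i j g) (by omega))]
        · congr 1
          rw [expTrLap, lapPoly_sum]
          exact Finset.sum_congr rfl fun k _ => (lapPoly_smul A i j _ _).symm

end Comm

/-- with `f = exp(−tr Δ_A/(8π)) g` for a polynomial `g`,
`(E − Δ_A/(4π)) f = λ·I·f` holds iff `E g = λ·I·g`. -/
theorem stmt6 {m n : ℕ} (A : Matrix (Fin m) (Fin m) ℝ) (hAs : Aᵀ = A)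
    (hA : IsUnit A.det) (lam : ℤ) (g : MvPolynomial (Fin m × Fin n) ℝ) :
    (∀ i j : Fin n,
        eulerPoly i j (expTrLap A (-(8 * Real.pi)⁻¹) g) -
            ((4 * Real.pi)⁻¹ : ℝ) • lapPoly A i j (expTrLap A (-(8 * Real.pi)⁻¹) g) =
          ((lam : ℝ) * if i = j then 1 else 0) • expTrLap A (-(8 * Real.pi)⁻¹) g) ↔
    (∀ i j : Fin n,
        eulerPoly i j g = ((lam : ℝ) * if i = j then 1 else 0) • g) := by
  have hinv : ∀ a b, A⁻¹ a b = A⁻¹ b a := by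
    intro a b
    have h : (A⁻¹)ᵀ = A⁻¹ := by rw [Matrix.transpose_nonsing_inv, hAs]
    conv_lhs => rw [← h]
    exact Matrix.transpose_apply _ _ _
  set c : ℝ := -(8 * Real.pi)⁻¹ with hc
  have h2c : ((4 * Real.pi)⁻¹ : ℝ) = -(2 * c) := by
    rw [hc]
    have hπ : Real.pi ≠ 0 := Real.pi_ne_zero
    field_simp
    ring
  have key : ∀ i j : Fin n,
      eulerPoly i j (expTrLap A c g) - ((4 * Real.pi)⁻¹ : ℝ) • lapPoly A i j (expTrLap A c g)
        = expTrLap A c (eulerPoly i j g) := by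
    intro i j
    rw [euler_expTrLap A i j hinv c g, h2c, neg_smul]
    abel
  constructor
  · intro h i j
    have h1 := h i j
    have h3 : expTrLap A c (eulerPoly i j g
        - ((lam : ℝ) * if i = j then 1 else 0) • g) = 0 := by
      rw [expTrLap_sub, expTrLap_smul, ← key i j, h1, sub_self]
    exact sub_eq_zero.mp (expTrLap_eq_zero A h3)
  · intro h i j
    rw [key i j, h i j, expTrLap_smul]
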